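/- Let $d$ be a lower semicontinuous metric on $\mathbb{C}$, let $x \in \mathbb{C}$ with some point at finite $d$-distance from $x$, and suppose there exists a sequence of disjoint $d$-continuous loops $\{\pi_n\}_{n \in \mathbb{N}}$, each disconnecting a Euclidean neighborhood of $x$ from $\infty$, such that the Euclidean radius of $\pi_n$, the $d$-length of $\pi_n$, and the $d$-distance from $x$ to $\pi_n$ all tend to $0$ as $n \to \infty$. Let $y \in \mathbb{C} \cup \{\infty\}$ with $d(x,y) > s > 0$ and suppose there is a $d$-geodesic $P$ from $x$ to $y$ (a $d$-length-minimizing path that is continuous for the Euclidean topology). Then the filled metric ball $\mathcal{B}_s^{y,\bullet}(x)$ contains a Euclidean ball of positive radius centered at $x$. -/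

import Mathlib

open scoped ENNReal

/-- The `d`-length of the path `P` over `[a, b]`, defined as the supremum over partitions of
sums of consecutive distances. -/
noncomputable def pathLen (d : ℂ → ℂ → ℝ≥0∞) (P : ℝ → ℂ) (a b : ℝ) : ℝ≥0∞ :=
  ⨆ (n : ℕ) (t : Fin (n + 1) → ℝ) (_ : Monotone t) (_ : t 0 = a) (_ : t (Fin.last n) = b),
    ∑ i : Fin n, d (P (t i.castSucc)) (P (t i.succ))

/-- The filled metric ball `𝓑_s^{y,•}(x)`: the union of the closed `d`-ball of radius `s`
about `x` and the set of points which it disconnects from `y`, where `y : Option ℂ` with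
`none` representing `∞` (a point is disconnected from `∞` iff its connected component in the
complement of the ball is bounded). -/
def filledBall (d : ℂ → ℂ → ℝ≥0∞) (x : ℂ) (s : ℝ) (y : Option ℂ) : Set ℂ :=
  {z | d x z ≤ ENNReal.ofReal s} ∪
    y.elim
      {z | Bornology.IsBounded (connectedComponentIn {w | ¬ d x w ≤ ENNReal.ofReal s} z)}
      (fun y₀ => {z | z ∉ connectedComponentIn {w | ¬ d x w ≤ ENNReal.ofReal s} y₀})

lemma pathLen_ge (d : ℂ → ℂ → ℝ≥0∞) (P : ℝ → ℂ) {a b : ℝ}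
    (ha : 0 ≤ a) (hab : a ≤ b) (hb : b ≤ 1) :
    d (P a) (P b) ≤ pathLen d P 0 1 := by
  have hmono : Monotone ![(0:ℝ), a, b, 1] := by
    rw [Fin.monotone_iff_le_succ]
    intro i
    fin_cases i
    · simpa using ha
    · simpa using hab
    · simpa using hb
  have key : d (P a) (P b) ≤
      ∑ i : Fin 3, d (P ((![(0:ℝ),a,b,1]) i.castSucc)) (P ((![(0:ℝ),a,b,1]) i.succ)) := by
    rw [Fin.sum_univ_three]
    show d (P a) (P b) ≤ d (P 0) (P a) + d (P a) (P b) + d (P b) (P 1)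
    exact le_add_self.trans le_self_add
  refine key.trans ?_
  exact le_iSup_of_le 3 (le_iSup_of_le ![(0:ℝ),a,b,1] (le_iSup_of_le hmono
    (le_iSup_of_le rfl (le_iSup_of_le rfl le_rfl))))

lemma mem_closure_convexHull_of_bounded_component (K : Set ℂ) (x : ℂ)
    (hx : x ∈ Kᶜ) (hb : Bornology.IsBounded (connectedComponentIn Kᶜ x)) :
    x ∈ closure (convexHull ℝ K) := by
  by_contra hxC
  obtain ⟨f, u, hfu, hux⟩ := geometric_hahn_banach_closed_point
    (convex_convexHull ℝ K).closure isClosed_closure hxC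
  set H := {w : ℂ | u < f w} with hH
  have hHx : x ∈ H := hux
  have hHK : H ⊆ Kᶜ := fun w hw hwK =>
    absurd (hfu w (subset_closure (subset_convexHull ℝ K hwK))) (not_lt.2 hw.le)
  have hHconv : Convex ℝ H := convex_halfSpace_gt ⟨f.map_add, f.map_smul⟩ u
  have hsub : H ⊆ connectedComponentIn Kᶜ x :=
    hHconv.isPreconnected.subset_connectedComponentIn hHx hHK
  have hHb : Bornology.IsBounded H := hb.subset hsub
  obtain ⟨R, hR⟩ := isBounded_iff_forall_norm_le.1 hHb
  by_cases hf0 : f = 0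
  · have hux0 : u < 0 := by
      have : f x = 0 := by rw [hf0]; rfl
      linarith [this ▸ hux]
    have hmem : ((max R 0 + 1 : ℝ) : ℂ) ∈ H := by
      simp only [hH, Set.mem_setOf_eq, hf0, ContinuousLinearMap.zero_apply]
      exact hux0
    have := hR _ hmem
    rw [Complex.norm_real, Real.norm_of_nonneg (by positivity)] at this
    have : R ≤ max R 0 := le_max_left _ _
    linarith [hR _ hmem, Complex.norm_real (max R 0 + 1)]
  · obtain ⟨v, hv⟩ : ∃ v : ℂ, 0 < f v := by
      obtain ⟨w, hw⟩ := ContinuousLinearMap.exists_ne_zero hf0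
      rcases lt_or_gt_of_ne hw with h | h
      · exact ⟨-w, by simpa using h⟩
      · exact ⟨w, h⟩
    have hvne : v ≠ 0 := fun h => by simp [h] at hv
    have hR0 : ‖x‖ ≤ R := hR x hHx
    set t : ℝ := (R + ‖x‖ + 1) / ‖v‖ with ht
    have htpos : 0 ≤ t := div_nonneg (by linarith [norm_nonneg x]) (norm_nonneg v)
    have hmem : x + t • v ∈ H := by
      simp only [hH, Set.mem_setOf_eq, map_add, map_smul, smul_eq_mul]
      have : 0 ≤ t * f v := mul_nonneg htpos hv.le
      linarith
    have hnorm := hR _ hmem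
    have h1 : ‖t • v‖ ≤ ‖x + t • v‖ + ‖x‖ := by
      calc ‖t • v‖ = ‖(x + t • v) - x‖ := by rw [add_sub_cancel_left]
        _ ≤ ‖x + t • v‖ + ‖x‖ := norm_sub_le _ _
    have h2 : ‖t • v‖ = R + ‖x‖ + 1 := by
      rw [norm_smul, Real.norm_of_nonneg htpos, ht, div_mul_cancel₀]
      exact norm_ne_zero_iff.2 hvne
    linarith

/-- If `x` is a non-singular point for a lower semicontinuous metric `d` on `ℂ`, admitting a
sequence of disjoint `d`-continuous loops separating a neighborhood of `x` from `∞` whose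
Euclidean radii, `d`-lengths and `d`-distances to `x` tend to `0`, and if there is a
`d`-geodesic from `x` to `y ∈ ℂ ∪ {∞}` with `d x y > s > 0`, then the filled metric ball
`𝓑_s^{y,•}(x)` contains a Euclidean ball of positive radius centered at `x`. -/
theorem filled_ball_contains_euclidean_ball (d : ℂ → ℂ → ℝ≥0∞)
    (hlsc : LowerSemicontinuous fun p : ℂ × ℂ => d p.1 p.2)
    (hrefl : ∀ z, d z z = 0)
    (hsymm : ∀ z w, d z w = d w z)
    (htri : ∀ z w u, d z u ≤ d z w + d w u)
    (x : ℂ) (hx : ∃ w : ℂ, w ≠ x ∧ d x w ≠ ⊤)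
    (γ : ℕ → ℝ → ℂ)
    (hloop : ∀ n, γ n 0 = γ n 1)
    (hdisj : Pairwise fun m n => Disjoint (γ m '' Set.Icc (0:ℝ) 1) (γ n '' Set.Icc (0:ℝ) 1))
    (hcont : ∀ n, ∀ t ∈ Set.Icc (0:ℝ) 1, ∀ ε : ℝ≥0∞, 0 < ε → ∃ δ : ℝ, 0 < δ ∧
      ∀ u ∈ Set.Icc (0:ℝ) 1, |u - t| < δ → d (γ n t) (γ n u) < ε)
    (hsep : ∀ n, ∃ r : ℝ, 0 < r ∧ Metric.ball x r ⊆ (γ n '' Set.Icc (0:ℝ) 1)ᶜ ∧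
      Bornology.IsBounded (connectedComponentIn (γ n '' Set.Icc (0:ℝ) 1)ᶜ x))
    (hrad : Filter.Tendsto (fun n => Metric.ediam (γ n '' Set.Icc (0:ℝ) 1))
      Filter.atTop (nhds 0))
    (hlen : Filter.Tendsto (fun n => pathLen d (γ n) 0 1) Filter.atTop (nhds 0))
    (hdist : Filter.Tendsto (fun n => ⨅ t ∈ Set.Icc (0:ℝ) 1, d x (γ n t))
      Filter.atTop (nhds 0))
    (y : Option ℂ) (s : ℝ) (hs : 0 < s)
    (hy : ∀ y₀ : ℂ, y = some y₀ → ENNReal.ofReal s < d x y₀)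
    (hgeo : ∃ (T : ℝ≥0∞) (P : ℝ → ℂ), P 0 = x ∧
      ContinuousOn P {t : ℝ | 0 ≤ t ∧ ENNReal.ofReal t ≤ T} ∧
      (∀ a b : ℝ, 0 ≤ a → a ≤ b → ENNReal.ofReal b ≤ T →
        d (P a) (P b) = ENNReal.ofReal (b - a)) ∧
      y.elim
        (T = ⊤ ∧ Filter.Tendsto (fun t => ‖P t‖) Filter.atTop Filter.atTop)
        (fun y₀ => T = d x y₀ ∧ ∀ t : ℝ, ENNReal.ofReal t = T → P t = y₀)) :
    ∃ r : ℝ, 0 < r ∧ Metric.ball x r ⊆ filledBall d x s y := by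
  have hs' : (0:ℝ≥0∞) < ENNReal.ofReal s := ENNReal.ofReal_pos.mpr hs
  set S := ENNReal.ofReal s with hSdef
  have hhalf : (0:ℝ≥0∞) < S / 2 := ENNReal.half_pos hs'.ne'
  set c : ℝ≥0∞ := y.elim 1 (fun y₀ => edist x y₀) with hc
  have hcpos : (0:ℝ≥0∞) < c := by
    cases y with
    | none => simp [hc]
    | some y₀ =>
      have hne : x ≠ y₀ := by
        intro h
        have := hy y₀ rfl
        rw [← h, hrefl] at this
        exact absurd this (by simpa using hs'.le)
      simpa [hc] using edist_pos.2 hne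
  have h1 := hlen.eventually_lt_const hhalf
  have h2 := hdist.eventually_lt_const hhalf
  have h3 := hrad.eventually_lt_const hcpos
  obtain ⟨n, hn1, hn2, hn3⟩ := (h1.and (h2.and h3)).exists
  obtain ⟨r, hr, hrK, hbdd⟩ := hsep n
  set K := γ n '' Set.Icc (0:ℝ) 1 with hK
  have hKS : K ⊆ {z | d x z ≤ S} := by
    obtain ⟨t₀, ht₀, hdt₀⟩ : ∃ t₀ ∈ Set.Icc (0:ℝ) 1, d x (γ n t₀) < S / 2 := by
      have h := hn2
      rw [iInf_lt_iff] at h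
      obtain ⟨t₀, h⟩ := h
      rw [iInf_lt_iff] at h
      obtain ⟨ht₀, h⟩ := h
      exact ⟨t₀, ht₀, h⟩
    rintro w ⟨t, ht, rfl⟩
    have hseg : d (γ n t₀) (γ n t) ≤ pathLen d (γ n) 0 1 := by
      rcases le_total t₀ t with h | h
      · exact pathLen_ge d (γ n) ht₀.1 h ht.2
      · rw [hsymm]
        exact pathLen_ge d (γ n) ht.1 h ht₀.2
    calc d x (γ n t) ≤ d x (γ n t₀) + d (γ n t₀) (γ n t) := htri _ _ _
      _ ≤ S / 2 + S / 2 := add_le_add hdt₀.le (hseg.trans hn1.le)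
      _ = S := ENNReal.add_halves S
  have hSK : {w | ¬ d x w ≤ S} ⊆ Kᶜ := fun w hw hwK => hw (hKS hwK)
  set U := connectedComponentIn Kᶜ x with hU
  have hxK : x ∈ Kᶜ := hrK (Metric.mem_ball_self hr)
  have hballU : Metric.ball x r ⊆ U :=
    (convex_ball x r).isPreconnected.subset_connectedComponentIn (Metric.mem_ball_self hr) hrK
  refine ⟨r, hr, fun z hz => ?_⟩
  have hzU : z ∈ U := hballU hz
  by_cases hzS : d x z ≤ S
  · exact Or.inl hzS
  · have hVU : connectedComponentIn {w | ¬ d x w ≤ S} z ⊆ U := by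
      refine (connectedComponentIn_mono z hSK).trans ?_
      rw [hU, connectedComponentIn_eq hzU]
    right
    cases y with
    | none => exact hbdd.subset hVU
    | some y₀ =>
      show z ∉ connectedComponentIn {w | ¬ d x w ≤ S} y₀
      intro hzy
      have hy₀S : ¬ d x y₀ ≤ S := not_le.2 (hy y₀ rfl)
      have hy₀V : y₀ ∈ connectedComponentIn {w | ¬ d x w ≤ S} z := by
        rw [← connectedComponentIn_eq hzy]
        exact mem_connectedComponentIn hy₀S
      have hy₀U : y₀ ∈ U := hVU hy₀V
      have hxC := mem_closure_convexHull_of_bounded_component K x hxK hbdd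
      have hy₀C : y₀ ∈ closure (convexHull ℝ K) := by
        have hEq : connectedComponentIn Kᶜ y₀ = U := (connectedComponentIn_eq hy₀U).symm
        exact mem_closure_convexHull_of_bounded_component K y₀
          (connectedComponentIn_subset _ _ hy₀U) (hEq ▸ hbdd)
      have hdiam : edist x y₀ ≤ Metric.ediam K := by
        calc edist x y₀ ≤ Metric.ediam (closure (convexHull ℝ K)) :=
              Metric.edist_le_ediam_of_mem hxC hy₀C
          _ = Metric.ediam (convexHull ℝ K) := Metric.ediam_closure _
          _ = Metric.ediam K := convexHull_ediam K
      exact absurd hdiam (not_le.2 (by simpa [hc] using hn3))
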